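/- arXiv:2007.00715 — 5 statements merged into one kernel-verified Lean document; each statement's English description precedes it below -/
import Mathlib

section
/- For any vector w in R^n and any k ≤ n, the Euclidean projection of w onto the set of k-sparse nonnegative vectors (vectors with at most k nonzero entries, all entries nonnegative) is obtained by keeping the k largest positive entries of w and setting all other entries to zero. That is, the vector w' defined by keeping the top-k positive entries minimizes ||w' - w||_2 over all k-sparse nonnegative vectors. -/
open Finset

/-- Squared Euclidean norm of a vector. -/
noncomputable def sqnorm {n : ℕ} (w : Fin n → ℝ) : ℝ := ∑ i, (w i)^2

/-- Euclidean (ℓ₂) norm of a vector. -/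
noncomputable def nrm {n : ℕ} (w : Fin n → ℝ) : ℝ := Real.sqrt (∑ i, (w i)^2)

/-- A vector is `k`-sparse if it has at most `k` nonzero entries. -/
def IsSparse {n : ℕ} (k : ℕ) (w : Fin n → ℝ) : Prop :=
  (Finset.univ.filter fun i => w i ≠ 0).card ≤ k

/-- Coordinate projection onto the subspace supported on `S`. -/
def proj {n : ℕ} (S : Finset (Fin n)) (w : Fin n → ℝ) : Fin n → ℝ :=
  fun i => if i ∈ S then w i else 0

/-- The Euclidean projection of `w` onto the set of `k`-sparse nonnegative vectors is
obtained by keeping the `k` largest positive entries of `w` (indexed by `S`) and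
setting all other entries to zero. -/
theorem projection_onto_sparse_nonneg_is_topk {n k : ℕ} (hkn : k ≤ n)
    (w : Fin n → ℝ) (S : Finset (Fin n))
    (hScard : S.card ≤ k)
    (hpos : ∀ i ∈ S, 0 < w i)
    (htop : ∀ i ∈ S, ∀ j ∉ S, w j ≤ w i)
    (hfull : ∀ j ∉ S, 0 < w j → S.card = k) :
    ∀ v : Fin n → ℝ, IsSparse k v → (∀ i, 0 ≤ v i) →
      nrm (proj S w - w) ≤ nrm (v - w) := by
  intro v hv hvnn
  unfold nrm
  apply Real.sqrt_le_sqrt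
  simp only [Pi.sub_apply]
  set T := Finset.univ.filter (fun i => v i ≠ 0) with hT
  set A := Finset.univ.filter (fun i => i ∉ S ∧ v i ≠ 0 ∧ 0 < w i) with hA
  set B := S \ T with hB
  -- LHS is the sum over the complement of S
  have hL : ∑ i, (proj S w i - w i)^2 = ∑ i ∈ Sᶜ, (w i)^2 := by
    rw [← Finset.sum_compl_add_sum S]
    have h1 : ∑ i ∈ S, (proj S w i - w i)^2 = 0 :=
      Finset.sum_eq_zero (by intro i hi; simp [proj, hi])
    have h2 : ∀ i ∈ Sᶜ, (proj S w i - w i)^2 = (w i)^2 := by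
      intro i hi
      simp [proj, Finset.mem_compl.mp hi]
    rw [h1, add_zero]
    exact Finset.sum_congr rfl h2
  rw [hL]
  have hAsub : A ⊆ T \ S := by
    intro i hi
    simp only [hA, Finset.mem_filter, Finset.mem_univ, true_and] at hi
    simp only [hT, Finset.mem_sdiff, Finset.mem_filter, Finset.mem_univ, true_and]
    exact ⟨hi.2.1, hi.1⟩
  have hAsubSc : A ⊆ Sᶜ := by
    intro i hi
    simp only [hA, Finset.mem_filter, Finset.mem_univ, true_and] at hi
    exact Finset.mem_compl.mpr hi.1
  -- key: sum over A of squares is at most sum over B of squares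
  have hkey : ∑ i ∈ A, (w i)^2 ≤ ∑ i ∈ B, (w i)^2 := by
    rcases A.eq_empty_or_nonempty with h | hAne
    · rw [h, Finset.sum_empty]
      exact Finset.sum_nonneg (fun i _ => sq_nonneg _)
    · obtain ⟨a0, ha0⟩ := hAne
      have ha0' := Finset.mem_filter.mp ha0
      have hSk : S.card = k := hfull a0 ha0'.2.1 ha0'.2.2.2
      have hTk : T.card ≤ k := hv
      have hcA : A.card ≤ (T \ S).card := Finset.card_le_card hAsub
      have e1 : (T \ S).card + (T ∩ S).card = T.card := Finset.card_sdiff_add_card_inter T S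
      have e2 : (S \ T).card + (S ∩ T).card = S.card := Finset.card_sdiff_add_card_inter S T
      have e3 : (T ∩ S).card = (S ∩ T).card := by rw [Finset.inter_comm]
      have hAcard : A.card ≤ B.card := by rw [hB]; omega
      have hApos : 0 < A.card := Finset.card_pos.mpr ⟨a0, ha0⟩
      have hBne : B.Nonempty := Finset.card_pos.mp (lt_of_lt_of_le hApos hAcard)
      obtain ⟨j0, hj0B, hj0⟩ := B.exists_mem_eq_inf' hBne (fun j => (w j)^2)
      have hj0S : j0 ∈ S := (Finset.mem_sdiff.mp hj0B).1
      have hmnn : (0:ℝ) ≤ B.inf' hBne (fun j => (w j)^2) := by rw [hj0]; exact sq_nonneg _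
      have hmle : ∀ i ∈ A, (w i)^2 ≤ B.inf' hBne (fun j => (w j)^2) := by
        intro i hi
        simp only [hA, Finset.mem_filter, Finset.mem_univ, true_and] at hi
        have h1 : w i ≤ w j0 := htop j0 hj0S i hi.1
        rw [hj0]
        nlinarith [hi.2.2]
      calc ∑ i ∈ A, (w i)^2 ≤ ∑ _i ∈ A, B.inf' hBne (fun j => (w j)^2) :=
              Finset.sum_le_sum hmle
        _ = (A.card : ℝ) * B.inf' hBne (fun j => (w j)^2) := by
              rw [Finset.sum_const, nsmul_eq_mul]
        _ ≤ (B.card : ℝ) * B.inf' hBne (fun j => (w j)^2) := by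
              apply mul_le_mul_of_nonneg_right _ hmnn
              exact_mod_cast hAcard
        _ ≤ ∑ j ∈ B, (w j)^2 := by
              rw [← nsmul_eq_mul]
              exact Finset.card_nsmul_le_sum B _ _ (fun j hj => Finset.inf'_le _ hj)
  -- on B, v vanishes
  have hBv : ∀ j ∈ B, (w j)^2 = (v j - w j)^2 := by
    intro j hj
    have := (Finset.mem_sdiff.mp hj).2
    simp only [hT, Finset.mem_filter, Finset.mem_univ, true_and, not_not] at this
    rw [this, zero_sub, neg_sq]
  -- outside S and outside A, the cost is at least w i ^2
  have hout : ∀ i ∈ Sᶜ \ A, (w i)^2 ≤ (v i - w i)^2 := by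
    intro i hi
    obtain ⟨hiSc, hiA⟩ := Finset.mem_sdiff.mp hi
    have hiS : i ∉ S := Finset.mem_compl.mp hiSc
    simp only [hA, Finset.mem_filter, Finset.mem_univ, true_and, not_and, not_lt] at hiA
    rcases eq_or_ne (v i) 0 with hv0 | hv0
    · rw [hv0, zero_sub, neg_sq]
    · have hw : w i ≤ 0 := hiA hiS hv0
      nlinarith [hvnn i]
  calc ∑ i ∈ Sᶜ, (w i)^2
      = ∑ i ∈ Sᶜ \ A, (w i)^2 + ∑ i ∈ A, (w i)^2 := (Finset.sum_sdiff hAsubSc).symm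
    _ ≤ ∑ i ∈ Sᶜ \ A, (v i - w i)^2 + ∑ i ∈ B, (w i)^2 :=
        add_le_add (Finset.sum_le_sum hout) hkey
    _ = ∑ i ∈ Sᶜ \ A, (v i - w i)^2 + ∑ i ∈ B, (v i - w i)^2 := by
        congr 1; exact Finset.sum_congr rfl hBv
    _ ≤ ∑ i ∈ Sᶜ, (v i - w i)^2 + ∑ i ∈ S, (v i - w i)^2 :=
        add_le_add
          (Finset.sum_le_sum_of_subset_of_nonneg (Finset.sdiff_subset)
            (fun i _ _ => sq_nonneg _))
          (Finset.sum_le_sum_of_subset_of_nonneg (Finset.sdiff_subset)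
            (fun i _ _ => sq_nonneg _))
    _ = ∑ i, (v i - w i)^2 := Finset.sum_compl_add_sum S _
end

section
/- Suppose Φ satisfies the RIP with constants α_k, β_k. Then for any two sets S_1, S_2 ⊆ [n] with |S_1 ∪ S_2| ≤ k and any w ∈ R^n, it holds that ||Π_{S_1} Φ^⊤ Φ Π_{S_1^c} Π_{S_2} w||_2 ≤ ((β_k - α_k)/2) ||Π_{S_2} w||_2. -/
open Finset Matrix

lemma sqnorm_nonneg {n : ℕ} (w : Fin n → ℝ) : 0 ≤ sqnorm w :=
  Finset.sum_nonneg fun i _ => sq_nonneg _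

lemma nrm_nonneg {n : ℕ} (w : Fin n → ℝ) : 0 ≤ nrm w := Real.sqrt_nonneg _

lemma nrm_sq {n : ℕ} (w : Fin n → ℝ) : nrm w ^ 2 = sqnorm w :=
  Real.sq_sqrt (sqnorm_nonneg w)

lemma nrm_eq_zero {n : ℕ} {w : Fin n → ℝ} (h : nrm w = 0) : w = 0 := by
  have hs : sqnorm w = 0 := by
    have := nrm_sq w; rw [h] at this; simpa using this.symm
  funext i
  have := (Finset.sum_eq_zero_iff_of_nonneg (fun i _ => sq_nonneg (w i))).1 hs i (by simp)
  simpa using pow_eq_zero_iff (n := 2) (by norm_num) |>.1 this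

lemma sparse_of_subset {n k : ℕ} {w : Fin n → ℝ} {T : Finset (Fin n)}
    (h : ∀ i, w i ≠ 0 → i ∈ T) (hT : T.card ≤ k) : IsSparse k w := by
  refine le_trans (Finset.card_le_card ?_) hT
  intro i hi
  exact h i (by simpa using hi)

lemma sqnorm_smul {n : ℕ} (s : ℝ) (w : Fin n → ℝ) :
    sqnorm (s • w) = s ^ 2 * sqnorm w := by
  simp [sqnorm, Finset.mul_sum, mul_pow]

lemma nrm_smul {n : ℕ} (s : ℝ) (w : Fin n → ℝ) :
    nrm (s • w) = |s| * nrm w := by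
  simp only [nrm, Pi.smul_apply, smul_eq_mul, mul_pow, ← Finset.mul_sum]
  rw [Real.sqrt_mul (sq_nonneg s), Real.sqrt_sq_eq_abs]

/-- Polarization-type bound for disjointly supported vectors. -/
lemma key_bound {m n k : ℕ} (Φ : Matrix (Fin m) (Fin n) ℝ) (α β : ℝ)
    (hRIP : ∀ w : Fin n → ℝ, IsSparse k w →
      α * sqnorm w ≤ sqnorm (Φ.mulVec w) ∧ sqnorm (Φ.mulVec w) ≤ β * sqnorm w)
    {T : Finset (Fin n)} (hT : T.card ≤ k) (u v : Fin n → ℝ)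
    (hu : ∀ i, u i ≠ 0 → i ∈ T) (hv : ∀ i, v i ≠ 0 → i ∈ T)
    (hdisj : ∀ i, u i * v i = 0) :
    (Φ.mulVec u) ⬝ᵥ (Φ.mulVec v) ≤ (β - α) / 4 * (sqnorm u + sqnorm v) := by
  have hadd : IsSparse k (u + v) := sparse_of_subset (fun i hi => by
    by_cases h : u i = 0
    · exact hv i (by simpa [h] using hi)
    · exact hu i h) hT
  have hsub : IsSparse k (u - v) := sparse_of_subset (fun i hi => by
    by_cases h : u i = 0
    · exact hv i (fun h' => hi (by simp [h, h'])) 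
    · exact hu i h) hT
  have hcross : ∑ i, u i * v i = 0 := by
    simp [hdisj]
  have hnadd : sqnorm (u + v) = sqnorm u + sqnorm v := by
    have h : ∀ i, (u i + v i)^2 = u i ^ 2 + v i ^ 2 + 2 * (u i * v i) := fun i => by ring
    simp only [sqnorm, Pi.add_apply, h, hdisj, mul_zero, add_zero]
    rw [Finset.sum_add_distrib]
  have hnsub : sqnorm (u - v) = sqnorm u + sqnorm v := by
    have h : ∀ i, (u i - v i)^2 = u i ^ 2 + v i ^ 2 - 2 * (u i * v i) := fun i => by ring
    simp only [sqnorm, Pi.sub_apply, h, hdisj, mul_zero, sub_zero]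
    rw [Finset.sum_add_distrib]
  have hpol : (Φ.mulVec u) ⬝ᵥ (Φ.mulVec v)
      = (sqnorm (Φ.mulVec (u + v)) - sqnorm (Φ.mulVec (u - v))) / 4 := by
    simp only [Matrix.mulVec_add, Matrix.mulVec_sub, sqnorm, dotProduct,
      Pi.add_apply, Pi.sub_apply]
    rw [eq_div_iff (by norm_num : (4:ℝ) ≠ 0), Finset.sum_mul, ← Finset.sum_sub_distrib]
    exact Finset.sum_congr rfl fun j _ => by ring
  have h1 := (hRIP (u + v) hadd).2
  have h2 := (hRIP (u - v) hsub).1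
  rw [hnadd] at h1
  rw [hnsub] at h2
  rw [hpol]
  linarith

lemma inner_bound {m n k : ℕ} (Φ : Matrix (Fin m) (Fin n) ℝ) (α β : ℝ)
    (hαβ : α ≤ β)
    (hRIP : ∀ w : Fin n → ℝ, IsSparse k w →
      α * sqnorm w ≤ sqnorm (Φ.mulVec w) ∧ sqnorm (Φ.mulVec w) ≤ β * sqnorm w)
    {T : Finset (Fin n)} (hT : T.card ≤ k) (u v : Fin n → ℝ)
    (hu : ∀ i, u i ≠ 0 → i ∈ T) (hv : ∀ i, v i ≠ 0 → i ∈ T)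
    (hdisj : ∀ i, u i * v i = 0) :
    (Φ.mulVec u) ⬝ᵥ (Φ.mulVec v) ≤ (β - α) / 2 * (nrm u * nrm v) := by
  have hc : 0 ≤ (β - α) / 2 := by linarith
  rcases eq_or_lt_of_le (nrm_nonneg u) with h0 | hupos
  · have : u = 0 := nrm_eq_zero h0.symm
    subst this
    simp only [Matrix.mulVec_zero, zero_dotProduct]
    exact mul_nonneg hc (mul_nonneg (nrm_nonneg _) (nrm_nonneg _))
  rcases eq_or_lt_of_le (nrm_nonneg v) with h0 | hvpos
  · have : v = 0 := nrm_eq_zero h0.symm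
    subst this
    simp only [Matrix.mulVec_zero, dotProduct_zero]
    exact mul_nonneg hc (mul_nonneg (nrm_nonneg _) (nrm_nonneg _))
  set a := nrm u with ha
  set b := nrm v with hb
  set s : ℝ := Real.sqrt (b / a) with hs
  have hspos : 0 < s := Real.sqrt_pos.2 (div_pos hvpos hupos)
  have hs2 : s ^ 2 = b / a := Real.sq_sqrt (le_of_lt (div_pos hvpos hupos))
  have key := key_bound Φ α β hRIP hT (s • u) (s⁻¹ • v)
    (fun i hi => hu i (by intro h; apply hi; simp [h]))
    (fun i hi => hv i (by intro h; apply hi; simp [h]))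
    (fun i => by
      have := hdisj i
      simp only [Pi.smul_apply, smul_eq_mul]
      calc s * u i * (s⁻¹ * v i) = s * s⁻¹ * (u i * v i) := by ring
        _ = 0 := by rw [this, mul_zero])
  have hdot : (Φ.mulVec (s • u)) ⬝ᵥ (Φ.mulVec (s⁻¹ • v))
      = (Φ.mulVec u) ⬝ᵥ (Φ.mulVec v) := by
    rw [Matrix.mulVec_smul, Matrix.mulVec_smul, smul_dotProduct,
      dotProduct_smul]
    rw [smul_eq_mul, smul_eq_mul, ← mul_assoc, mul_inv_cancel₀ (ne_of_gt hspos), one_mul]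
  have hsu : sqnorm (s • u) = a * b := by
    rw [sqnorm_smul, hs2, ← nrm_sq u, ← ha]
    field_simp
  have hsv : sqnorm (s⁻¹ • v) = a * b := by
    rw [sqnorm_smul, inv_pow, hs2, ← nrm_sq v, ← hb]
    field_simp
  rw [hdot, hsu, hsv] at key
  calc (Φ.mulVec u) ⬝ᵥ (Φ.mulVec v) ≤ (β - α) / 4 * (a * b + a * b) := key
    _ = (β - α) / 2 * (a * b) := by ring

/-- Lemma 2: for support sets `S₁, S₂` with `|S₁ ∪ S₂| ≤ k`,
`‖Π_{S₁} Φᵀ Φ Π_{S₁ᶜ} Π_{S₂} w‖ ≤ ((β - α)/2) ‖Π_{S₂} w‖`. -/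
theorem rip_offdiag_proj {m n k : ℕ} (Φ : Matrix (Fin m) (Fin n) ℝ) (α β : ℝ)
    (hα : 0 < α) (hαβ : α ≤ β)
    (hRIP : ∀ w : Fin n → ℝ, IsSparse k w →
      α * sqnorm w ≤ sqnorm (Φ.mulVec w) ∧ sqnorm (Φ.mulVec w) ≤ β * sqnorm w)
    (S₁ S₂ : Finset (Fin n)) (hS : (S₁ ∪ S₂).card ≤ k) (w : Fin n → ℝ) :
    nrm (proj S₁ (Φ.transpose.mulVec (Φ.mulVec (proj S₁ᶜ (proj S₂ w)))))
      ≤ (β - α) / 2 * nrm (proj S₂ w) := by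
  set v : Fin n → ℝ := proj S₁ᶜ (proj S₂ w) with hv
  set y : Fin n → ℝ := Φ.transpose.mulVec (Φ.mulVec v) with hy
  set x : Fin n → ℝ := proj S₁ y with hx
  have hc : 0 ≤ (β - α) / 2 := by linarith
  -- supports
  have hxs : ∀ i, x i ≠ 0 → i ∈ S₁ ∪ S₂ := fun i hi => by
    simp only [hx, proj] at hi
    by_cases h : i ∈ S₁
    · exact Finset.mem_union_left _ h
    · simp [h] at hi
  have hvs : ∀ i, v i ≠ 0 → i ∈ S₁ ∪ S₂ := fun i hi => by
    simp only [hv, proj] at hi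
    by_cases h2 : i ∈ S₂
    · exact Finset.mem_union_right _ h2
    · by_cases h1 : i ∈ S₁ᶜ <;> simp [h1, h2] at hi
  have hdisj : ∀ i, x i * v i = 0 := fun i => by
    by_cases h : i ∈ S₁
    · have : v i = 0 := by simp [hv, proj, Finset.mem_compl.mpr, h]
      rw [this, mul_zero]
    · have : x i = 0 := by simp [hx, proj, h]
      rw [this, zero_mul]
  -- sqnorm x = ⟨Φx, Φv⟩
  have hsx : sqnorm x = (Φ.mulVec x) ⬝ᵥ (Φ.mulVec v) := by
    have h1 : sqnorm x = x ⬝ᵥ y := by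
      simp only [sqnorm, dotProduct]
      refine Finset.sum_congr rfl fun i _ => ?_
      by_cases h : i ∈ S₁ <;> simp [hx, proj, h, sq]
    rw [h1, hy, Matrix.mulVec_transpose, dotProduct_comm,
      ← Matrix.dotProduct_mulVec, dotProduct_comm]
  have hkey := inner_bound Φ α β hαβ hRIP hS x v hxs hvs hdisj
  rw [← hsx] at hkey
  have hxv : nrm x ≤ (β - α) / 2 * nrm v := by
    rcases eq_or_lt_of_le (nrm_nonneg x) with h0 | hxpos
    · rw [← h0]; exact mul_nonneg hc (nrm_nonneg _)
    · have h2 : nrm x * nrm x ≤ (β - α) / 2 * nrm v * nrm x := by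
        have : nrm x * nrm x = sqnorm x := by rw [← nrm_sq x]; ring
        rw [this]
        calc sqnorm x ≤ (β - α) / 2 * (nrm x * nrm v) := hkey
          _ = (β - α) / 2 * nrm v * nrm x := by ring
      exact le_of_mul_le_mul_right h2 hxpos
  have hvw : nrm v ≤ nrm (proj S₂ w) := by
    apply Real.sqrt_le_sqrt
    apply Finset.sum_le_sum
    intro i _
    by_cases h : i ∈ S₁ᶜ
    · simp [hv, proj, h]
    · simp only [hv, proj, h, if_false]
      simpa using sq_nonneg (if i ∈ S₂ then w i else 0)
  calc nrm x ≤ (β - α) / 2 * nrm v := hxv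
    _ ≤ (β - α) / 2 * nrm (proj S₂ w) := by
        exact mul_le_mul_of_nonneg_left hvw hc
end

section
/- Let X, Y ∈ R^n be unit vectors with disjoint supports, such that X + Y is k-sparse, and suppose Φ satisfies the RIP with constants α_k ≤ β_k. Then |⟨ΦX, ΦY⟩| ≤ (β_k - α_k)/2. -/
open Finset

/-- For unit vectors `X, Y` with disjoint supports whose sum is `k`-sparse,
the RIP implies `|⟨ΦX, ΦY⟩| ≤ (β - α)/2`. -/
theorem rip_inner_bound_disjoint_unit {m n k : ℕ} (Φ : Matrix (Fin m) (Fin n) ℝ)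
    (α β : ℝ) (hα : 0 < α) (hαβ : α ≤ β)
    (hRIP : ∀ w : Fin n → ℝ, IsSparse k w →
      α * sqnorm w ≤ sqnorm (Φ.mulVec w) ∧ sqnorm (Φ.mulVec w) ≤ β * sqnorm w)
    (X Y : Fin n → ℝ) (hX : nrm X = 1) (hY : nrm Y = 1)
    (hdisj : ∀ i, X i * Y i = 0) (hsp : IsSparse k (X + Y)) :
    |∑ j, Φ.mulVec X j * Φ.mulVec Y j| ≤ (β - α) / 2 := by
  -- squared norms of X and Y are 1
  have hX2 : sqnorm X = 1 := by
    have h := congrArg (fun t => t ^ 2) hX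
    simpa [nrm, sqnorm, Real.sq_sqrt (Finset.sum_nonneg fun i _ => sq_nonneg (X i))] using h
  have hY2 : sqnorm Y = 1 := by
    have h := congrArg (fun t => t ^ 2) hY
    simpa [nrm, sqnorm, Real.sq_sqrt (Finset.sum_nonneg fun i _ => sq_nonneg (Y i))] using h
  have hXY0 : ∑ i, X i * Y i = 0 := by
    simp [hdisj]
  have hplus : sqnorm (X + Y) = 2 := by
    have : sqnorm (X + Y) = sqnorm X + 2 * (∑ i, X i * Y i) + sqnorm Y := by
      simp only [sqnorm, Pi.add_apply, Finset.mul_sum, ← Finset.sum_add_distrib]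
      exact Finset.sum_congr rfl fun i _ => by ring
    rw [this, hX2, hY2, hXY0]; ring
  have hminus : sqnorm (X - Y) = 2 := by
    have : sqnorm (X - Y) = sqnorm X - 2 * (∑ i, X i * Y i) + sqnorm Y := by
      simp only [sqnorm, Pi.sub_apply, Finset.mul_sum, ← Finset.sum_sub_distrib,
        ← Finset.sum_add_distrib]
      exact Finset.sum_congr rfl fun i _ => by ring
    rw [this, hX2, hY2, hXY0]; ring
  have hspm : IsSparse k (X - Y) := by
    refine le_trans (Finset.card_le_card ?_) hsp
    intro i hi
    simp only [Finset.mem_filter, Finset.mem_univ, true_and, Pi.sub_apply, Pi.add_apply] at hi ⊢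
    intro h
    apply hi
    rcases mul_eq_zero.mp (hdisj i) with h0 | h0 <;> [skip; skip] <;>
      · rw [h0] at h ⊢; linarith
  have h1 := hRIP (X + Y) hsp
  have h2 := hRIP (X - Y) hspm
  rw [hplus] at h1
  rw [hminus] at h2
  have key : sqnorm (Φ.mulVec (X + Y)) - sqnorm (Φ.mulVec (X - Y)) =
      4 * ∑ j, Φ.mulVec X j * Φ.mulVec Y j := by
    simp only [sqnorm, Matrix.mulVec_add, Matrix.mulVec_sub, Pi.add_apply, Pi.sub_apply,
      Finset.mul_sum, ← Finset.sum_sub_distrib]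
    exact Finset.sum_congr rfl fun j _ => by ring
  rw [abs_le]
  constructor <;> nlinarith [h1.1, h1.2, h2.1, h2.2]
end

section
/- Let ρ, τ ≥ 0 and φ = (ρ(1+τ) + √(ρ²(1+τ)² + 4ρτ))/2. Then φ < 1 if and only if ρ < 1/(1 + 2τ). -/
open Finset

/-- The contraction factor `φ = (ρ(1+τ) + √(ρ²(1+τ)² + 4ρτ))/2` satisfies `φ < 1`
if and only if `ρ < 1/(1+2τ)`. -/
theorem phi_lt_one_iff (ρ τ : ℝ) (hρ : 0 ≤ ρ) (hτ : 0 ≤ τ) :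
    (ρ*(1+τ) + Real.sqrt (ρ^2*(1+τ)^2 + 4*ρ*τ)) / 2 < 1 ↔ ρ < 1/(1+2*τ) := by
  have h12 : (0:ℝ) < 1 + 2*τ := by linarith
  have hD : (0:ℝ) ≤ ρ^2*(1+τ)^2 + 4*ρ*τ := by positivity
  rw [div_lt_iff₀ (by norm_num : (0:ℝ)<2), lt_div_iff₀ h12]
  constructor
  · intro h
    have hs := Real.sqrt_nonneg (ρ^2*(1+τ)^2 + 4*ρ*τ)
    have h1 : Real.sqrt (ρ^2*(1+τ)^2 + 4*ρ*τ) < 2 - ρ*(1+τ) := by linarith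
    have h2 : ρ^2*(1+τ)^2 + 4*ρ*τ < (2 - ρ*(1+τ))^2 := by
      calc ρ^2*(1+τ)^2 + 4*ρ*τ = Real.sqrt (ρ^2*(1+τ)^2 + 4*ρ*τ)^2 := by
            rw [Real.sq_sqrt hD]
        _ < (2 - ρ*(1+τ))^2 := by
            apply sq_lt_sq' <;> nlinarith
    nlinarith
  · intro h
    have h1 : ρ*(1+τ) < 2 := by nlinarith
    have h2 : ρ^2*(1+τ)^2 + 4*ρ*τ < (2 - ρ*(1+τ))^2 := by nlinarith
    have h3 : Real.sqrt (ρ^2*(1+τ)^2 + 4*ρ*τ) < 2 - ρ*(1+τ) := by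
      calc Real.sqrt (ρ^2*(1+τ)^2 + 4*ρ*τ) < Real.sqrt ((2 - ρ*(1+τ))^2) :=
            Real.sqrt_lt_sqrt hD h2
        _ = 2 - ρ*(1+τ) := Real.sqrt_sq (by linarith)
    linarith
end

section
/- Let w_{t+1} be the optimal Euclidean projection of a vector v onto the set of k-sparse nonnegative vectors, and let w* be any k-sparse nonnegative vector. Let S* = supp(w_{t+1}) ∪ supp(w*). Then ||w_{t+1} - Π_{S*}(v)||_2 ≤ ||w* - Π_{S*}(v)||_2, and consequently ||w_{t+1} - w*||_2 ≤ 2||Π_{S*}(v) - w*||_2. -/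
open Finset

lemma sqnorm_split {n : ℕ} (S : Finset (Fin n)) (w v : Fin n → ℝ)
    (hw : ∀ i, i ∉ S → w i = 0) :
    sqnorm (w - v) = sqnorm (w - proj S v) + ∑ i, (if i ∈ S then 0 else (v i)^2) := by
  unfold sqnorm
  rw [← Finset.sum_add_distrib]
  apply Finset.sum_congr rfl
  intro i _
  by_cases h : i ∈ S <;> simp [proj, h, hw i, Pi.sub_apply]

lemma nrm_le_nrm {n : ℕ} {a b : Fin n → ℝ} (h : sqnorm a ≤ sqnorm b) :
    nrm a ≤ nrm b := Real.sqrt_le_sqrt h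

lemma sqnorm_le_sqnorm {n : ℕ} {a b : Fin n → ℝ} (h : nrm a ≤ nrm b) :
    sqnorm a ≤ sqnorm b := by
  have hb : (0:ℝ) ≤ sqnorm b := Finset.sum_nonneg fun i _ => sq_nonneg _
  exact (Real.sqrt_le_sqrt_iff (x := sqnorm a) hb).mp h

lemma nrm_triangle {n : ℕ} (a b c : Fin n → ℝ) :
    nrm (a - c) ≤ nrm (a - b) + nrm (b - c) := by
  have key : ∀ x : Fin n → ℝ, nrm x = ‖(WithLp.equiv 2 (Fin n → ℝ)).symm x‖ := by
    intro x
    rw [EuclideanSpace.norm_eq]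
    unfold nrm
    congr 1
    exact Finset.sum_congr rfl fun i _ => by simp [sq_abs]
  rw [key, key, key]
  have : (WithLp.equiv 2 (Fin n → ℝ)).symm (a - c) =
      (WithLp.equiv 2 (Fin n → ℝ)).symm (a - b) + (WithLp.equiv 2 (Fin n → ℝ)).symm (b - c) := by
    ext i; simp [Pi.sub_apply]
  rw [this]
  exact norm_add_le _ _

/-- For `w_{t+1}` the optimal projection of `v` onto `k`-sparse nonnegative vectors and
`w*` any `k`-sparse nonnegative vector, with `S* = supp(w_{t+1}) ∪ supp(w*)`:
`‖w_{t+1} - Π_{S*} v‖ ≤ ‖w* - Π_{S*} v‖` and `‖w_{t+1} - w*‖ ≤ 2 ‖Π_{S*} v - w*‖`. -/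
theorem projection_comparison {n k : ℕ} (v wstar wnext : Fin n → ℝ)
    (hwnexts : IsSparse k wnext) (hwnextpos : ∀ i, 0 ≤ wnext i)
    (hopt : ∀ u : Fin n → ℝ, IsSparse k u → (∀ i, 0 ≤ u i) →
      nrm (wnext - v) ≤ nrm (u - v))
    (hwstar : IsSparse k wstar) (hwstarpos : ∀ i, 0 ≤ wstar i)
    (S : Finset (Fin n))
    (hS : S = Finset.univ.filter (fun i => wnext i ≠ 0 ∨ wstar i ≠ 0)) :
    nrm (wnext - proj S v) ≤ nrm (wstar - proj S v) ∧
    nrm (wnext - wstar) ≤ 2 * nrm (proj S v - wstar) := by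
  have hwn : ∀ i, i ∉ S → wnext i = 0 := by
    intro i hi; by_contra h; exact hi (by simp [hS, h])
  have hws : ∀ i, i ∉ S → wstar i = 0 := by
    intro i hi; by_contra h; exact hi (by simp [hS, h])
  have h1 : sqnorm (wnext - v) ≤ sqnorm (wstar - v) :=
    sqnorm_le_sqnorm (hopt wstar hwstar hwstarpos)
  rw [sqnorm_split S wnext v hwn, sqnorm_split S wstar v hws] at h1
  have h2 : sqnorm (wnext - proj S v) ≤ sqnorm (wstar - proj S v) := by linarith
  have h3 : nrm (wnext - proj S v) ≤ nrm (wstar - proj S v) := nrm_le_nrm h2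
  refine ⟨h3, ?_⟩
  have h4 : nrm (wnext - wstar) ≤ nrm (wnext - proj S v) + nrm (proj S v - wstar) :=
    nrm_triangle _ _ _
  have h5 : nrm (wstar - proj S v) = nrm (proj S v - wstar) := by
    unfold nrm; congr 1
    exact Finset.sum_congr rfl fun i _ => by rw [Pi.sub_apply, Pi.sub_apply]; ring
  linarith
end
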